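/- (Deterministic form of Lemma 2.5, null case.) Fix t ∈ ℝ, r ≥ 1, β > 0, δ > 0, c₀ > 0, and set ν_n = δn − c₀ and τ_n² = βn. Then lim_{n→∞} n^{r+1/2} · BF₁₀(t | τ_n², r; ν_n) = β^{−(r+1/2)} · [ ₁F₁(r+1/2, 1/2; t²/2) + (t/√2) · (Γ(r+1)/Γ(r+1/2)) · ₁F₁(r+1, 3/2; t²/2) ], where BF₁₀(t|τ²,r;ν) denotes the two-sided t Bayes factor with ν degrees of freedom. In particular BF₁₀(t|τ_n²,r;ν_n) = O(n^{−(r+1/2)}). -/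

import Mathlib

open Real MeasureTheory Filter Asymptotics

/-- Rising factorial (Pochhammer symbol) `(a)_k`. -/
noncomputable def risingFac (a : ℝ) (k : ℕ) : ℝ := (ascPochhammer ℝ k).eval a

/-- Confluent hypergeometric function `₁F₁(a, b; x)`. -/
noncomputable def oneF1 (a b x : ℝ) : ℝ :=
  ∑' k : ℕ, (risingFac a k / risingFac b k) * x ^ k / (Nat.factorial k : ℝ)

/-- Gaussian hypergeometric function `₂F₁(a, b, c; x)` (as a series). -/
noncomputable def twoF1 (a b c x : ℝ) : ℝ :=
  ∑' k : ℕ, (risingFac a k * risingFac b k / (risingFac c k * (Nat.factorial k : ℝ))) * x ^ k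

/-- The quantity `y = τ t / √((ν + t²)(1 + τ²))` in terms of `τ² = τsq`. -/
noncomputable def tArg (t τsq ν : ℝ) : ℝ :=
  Real.sqrt τsq * t / Real.sqrt ((ν + t ^ 2) * (1 + τsq))

/-- Two-sided `t` Bayes factor `BF₁₀(t | τ², r; ν)` with `ν` degrees of freedom,
as a function of `τ² = τsq`. -/
noncomputable def BF10t (t τsq r ν : ℝ) : ℝ :=
  (1 + τsq) ^ (-(r + 1 / 2)) *
    (twoF1 ((ν + 1) / 2) (r + 1 / 2) (1 / 2) (tArg t τsq ν ^ 2)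
      + tArg t τsq ν * (Real.Gamma (ν / 2 + 1) / Real.Gamma ((ν + 1) / 2)) *
          (Real.Gamma (r + 1) / Real.Gamma (r + 1 / 2)) *
          twoF1 (ν / 2 + 1) (r + 1) (3 / 2) (tArg t τsq ν ^ 2))

open Topology
section Helpers

lemma risingFac_succ (a : ℝ) (k : ℕ) : risingFac a (k + 1) = risingFac a k * (a + k) := by
  simp [risingFac, ascPochhammer_succ_eval]

lemma risingFac_prod (a : ℝ) (k : ℕ) :
    risingFac a k = ∏ j ∈ Finset.range k, (a + j) := by
  induction k with
  | zero => simp [risingFac]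
  | succ k ih => rw [risingFac_succ, ih, Finset.prod_range_succ]

lemma risingFac_pos {a : ℝ} (ha : 0 < a) (k : ℕ) : 0 < risingFac a k := by
  rw [risingFac_prod]
  exact Finset.prod_pos fun j _ => by positivity

lemma risingFac_nonneg {a : ℝ} (ha : 0 ≤ a) (k : ℕ) : 0 ≤ risingFac a k := by
  rw [risingFac_prod]
  exact Finset.prod_nonneg fun j _ => by positivity

lemma lin_div (p q A B : ℝ) (hq : 0 < q) :
    Tendsto (fun n : ℕ => (p * n + A) / (q * n + B)) atTop (𝓝 (p / q)) := by
  have hA : Tendsto (fun n : ℕ => A / (n : ℝ)) atTop (𝓝 0) :=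
    tendsto_const_nhds.div_atTop tendsto_natCast_atTop_atTop
  have hB : Tendsto (fun n : ℕ => B / (n : ℝ)) atTop (𝓝 0) :=
    tendsto_const_nhds.div_atTop tendsto_natCast_atTop_atTop
  have h1 : Tendsto (fun n : ℕ => (p + A / n) / (q + B / n)) atTop (𝓝 (p / q)) := by
    have h2 : Tendsto (fun n : ℕ => (p + A / n) / (q + B / n)) atTop (𝓝 ((p + 0) / (q + 0))) :=
      (((tendsto_const_nhds : Tendsto (fun _ : ℕ => p) atTop (𝓝 p)).add hA).div
        ((tendsto_const_nhds : Tendsto (fun _ : ℕ => q) atTop (𝓝 q)).add hB)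
        (by simpa using hq.ne'))
    simpa using h2
  refine h1.congr' ?_
  filter_upwards [eventually_ge_atTop 1] with n hn
  have hn' : (n : ℝ) ≠ 0 := by positivity
  calc (p + A / n) / (q + B / n)
      = ((n : ℝ) * (p + A / n)) / ((n : ℝ) * (q + B / n)) :=
        (mul_div_mul_left _ _ hn').symm
    _ = (p * n + A) / (q * n + B) := by
        congr 1 <;> field_simp

lemma lin_div_one (q A B : ℝ) (hq : 0 < q) :
    Tendsto (fun n : ℕ => (q * n + A) / (q * n + B)) atTop (𝓝 1) := by
  simpa [div_self hq.ne'] using lin_div q q A B hq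

/-- Confluent limit of the ₂F₁ series. -/
lemma twoF1_tendsto {b c L : ℝ} (hb : 0 < b) (hc : 0 < c) (hL : 0 ≤ L)
    {a x : ℕ → ℝ} (ha : ∀ᶠ n in atTop, 0 ≤ a n) (hx0 : ∀ n, 0 ≤ x n)
    (hx : Tendsto x atTop (𝓝 0)) (hax : Tendsto (fun n => a n * x n) atTop (𝓝 L)) :
    Tendsto (fun n => twoF1 (a n) b c (x n)) atTop (𝓝 (oneF1 b c L)) := by
  set C : ℝ := L + 1 with hC
  have hCpos : 0 < C := by linarith
  set g : ℕ → ℝ := fun k =>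
    risingFac b k * risingFac (2 * C) k / (risingFac c k * (Nat.factorial k : ℝ)) * (1 / 2) ^ k
    with hg
  have hgpos : ∀ k, 0 < g k := by
    intro k
    have h1 := risingFac_pos hb k
    have h2 := risingFac_pos (by linarith : (0:ℝ) < 2 * C) k
    have h3 := risingFac_pos hc k
    have h4 : (0:ℝ) < Nat.factorial k := by positivity
    positivity
  have hgsum : Summable g := by
    refine summable_of_ratio_test_tendsto_lt_one (l := 1 / 2) (by norm_num)
      (Eventually.of_forall fun k => (hgpos k).ne') ?_
    have key : ∀ k : ℕ, ‖g (k + 1)‖ / ‖g k‖ =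
        (1 * k + b) / (1 * k + c) * ((1 * k + 2 * C) / (1 * k + 1)) * (1 / 2) := by
      intro k
      have h1 := risingFac_pos hb k
      have h2 := risingFac_pos (by linarith : (0:ℝ) < 2 * C) k
      have h3 := risingFac_pos hc k
      have h4 : (0:ℝ) < Nat.factorial k := by positivity
      have hbk : (0:ℝ) < b + k := by positivity
      have hck : (0:ℝ) < c + k := by positivity
      have hCk : (0:ℝ) < 2 * C + k := by positivity
      rw [Real.norm_eq_abs, Real.norm_eq_abs, abs_of_pos (hgpos _), abs_of_pos (hgpos _)]
      rw [hg]
      simp only [risingFac_succ, Nat.factorial_succ, Nat.cast_mul, pow_succ,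
        Nat.cast_add, Nat.cast_one]
      field_simp
      ring
    rw [show (1:ℝ)/2 = 1/1 * (1/1) * (1/2) by norm_num]
    exact Tendsto.congr (fun k => (key k).symm)
      (((lin_div 1 1 b c one_pos).mul (lin_div 1 1 (2*C) 1 one_pos)).mul tendsto_const_nhds)
  have hlim : ∀ k : ℕ, Tendsto
      (fun n => risingFac (a n) k * risingFac b k /
        (risingFac c k * (Nat.factorial k : ℝ)) * x n ^ k) atTop
      (𝓝 ((risingFac b k / risingFac c k) * L ^ k / (Nat.factorial k : ℝ))) := by
    intro k
    have key : Tendsto (fun n => risingFac (a n) k * x n ^ k) atTop (𝓝 (L ^ k)) := by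
      have heq : ∀ n, risingFac (a n) k * x n ^ k =
          ∏ j ∈ Finset.range k, ((a n + j) * x n) := by
        intro n
        rw [risingFac_prod, Finset.prod_mul_distrib, Finset.prod_const, Finset.card_range]
      have hprod : Tendsto (fun n => ∏ j ∈ Finset.range k, ((a n + j) * x n)) atTop
          (𝓝 (∏ _j ∈ Finset.range k, L)) := by
        refine tendsto_finset_prod _ fun j _ => ?_
        have h0 : Tendsto (fun n => a n * x n + (j : ℝ) * x n) atTop (𝓝 (L + (j : ℝ) * 0)) :=
          hax.add (tendsto_const_nhds.mul hx)
        have h2 : Tendsto (fun n => (a n + (j : ℝ)) * x n) atTop (𝓝 (L + (j : ℝ) * 0)) :=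
          Tendsto.congr (fun n => by ring) h0
        simpa using h2
      rw [show (L : ℝ) ^ k = ∏ _j ∈ Finset.range k, L by
        rw [Finset.prod_const, Finset.card_range]]
      exact Tendsto.congr (fun n => (heq n).symm) hprod
    have h5 : Tendsto (fun n => (risingFac (a n) k * x n ^ k) *
        (risingFac b k / (risingFac c k * (Nat.factorial k : ℝ)))) atTop
        (𝓝 (L ^ k * (risingFac b k / (risingFac c k * (Nat.factorial k : ℝ))))) :=
      key.mul tendsto_const_nhds
    have hv : (risingFac b k / risingFac c k) * L ^ k / (Nat.factorial k : ℝ) =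
        L ^ k * (risingFac b k / (risingFac c k * (Nat.factorial k : ℝ))) := by ring
    rw [hv]
    exact Tendsto.congr (fun n => by ring) h5
  have hbound : ∀ᶠ n in atTop, ∀ k : ℕ,
      ‖risingFac (a n) k * risingFac b k /
        (risingFac c k * (Nat.factorial k : ℝ)) * x n ^ k‖ ≤ g k := by
    filter_upwards [ha, hax.eventually_le_const (show L < C by simp [hC]),
      hx.eventually_le_const (show (0:ℝ) < 1/2 by norm_num)] with n han haxn hxn k
    have h1 := risingFac_pos hb k
    have h3 := risingFac_pos hc k
    have h4 : (0:ℝ) < Nat.factorial k := by positivity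
    have hra : 0 ≤ risingFac (a n) k := risingFac_nonneg han k
    have hterm : 0 ≤ risingFac (a n) k * risingFac b k /
        (risingFac c k * (Nat.factorial k : ℝ)) * x n ^ k :=
      mul_nonneg (div_nonneg (mul_nonneg hra h1.le) (by positivity))
        (pow_nonneg (hx0 n) k)
    rw [Real.norm_eq_abs, abs_of_nonneg hterm]
    have hmain : risingFac (a n) k * x n ^ k ≤ risingFac (2 * C) k * (1 / 2) ^ k := by
      have heq : risingFac (a n) k * x n ^ k =
          ∏ j ∈ Finset.range k, ((a n + j) * x n) := by
        rw [risingFac_prod, Finset.prod_mul_distrib, Finset.prod_const, Finset.card_range]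
      have heq2 : risingFac (2 * C) k * (1 / 2) ^ k =
          ∏ j ∈ Finset.range k, ((2 * C + j) * (1 / 2)) := by
        rw [risingFac_prod, Finset.prod_mul_distrib, Finset.prod_const, Finset.card_range]
      rw [heq, heq2]
      refine Finset.prod_le_prod (fun j _ =>
        mul_nonneg (add_nonneg han (Nat.cast_nonneg j)) (hx0 n)) (fun j _ => ?_)
      have hsplit : (a n + j) * x n = a n * x n + j * x n := by ring
      rw [hsplit]
      have h5 : (j : ℝ) * x n ≤ j * (1 / 2) :=
        mul_le_mul_of_nonneg_left hxn (by positivity)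
      have h6 : a n * x n + (j:ℝ) * x n ≤ C + j * (1/2) := by linarith
      linarith [h6]
    calc risingFac (a n) k * risingFac b k /
          (risingFac c k * (Nat.factorial k : ℝ)) * x n ^ k
        = (risingFac (a n) k * x n ^ k) *
            (risingFac b k / (risingFac c k * (Nat.factorial k : ℝ))) := by ring
      _ ≤ (risingFac (2 * C) k * (1 / 2) ^ k) *
            (risingFac b k / (risingFac c k * (Nat.factorial k : ℝ))) :=
          mul_le_mul_of_nonneg_right hmain (div_nonneg h1.le (by positivity))
      _ = g k := by rw [hg]; ring
  have hfin := tendsto_tsum_of_dominated_convergence hgsum hlim hbound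
  simpa only [twoF1, oneF1] using hfin

lemma gamma_convex_half {u v : ℝ} (hu : 0 < u) (hv : 0 < v) :
    Real.Gamma ((1/2) * u + (1/2) * v) ≤
      Real.sqrt (Real.Gamma u) * Real.sqrt (Real.Gamma v) := by
  have h := Real.convexOn_log_Gamma.2 (Set.mem_Ioi.mpr hu) (Set.mem_Ioi.mpr hv)
    (by norm_num : (0:ℝ) ≤ 1/2) (by norm_num : (0:ℝ) ≤ 1/2) (by norm_num)
  simp only [smul_eq_mul, Function.comp_apply] at h
  have hmid : 0 < (1/2) * u + (1/2) * v := by linarith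
  have hΓu := Real.Gamma_pos_of_pos hu
  have hΓv := Real.Gamma_pos_of_pos hv
  have hΓm := Real.Gamma_pos_of_pos hmid
  calc Real.Gamma ((1/2) * u + (1/2) * v)
      = Real.exp (Real.log (Real.Gamma ((1/2) * u + (1/2) * v))) := (Real.exp_log hΓm).symm
    _ ≤ Real.exp ((1/2) * Real.log (Real.Gamma u) + (1/2) * Real.log (Real.Gamma v)) :=
        Real.exp_le_exp.mpr h
    _ = Real.exp (Real.log (Real.Gamma u) * (1/2)) *
          Real.exp (Real.log (Real.Gamma v) * (1/2)) := by
        rw [← Real.exp_add]; ring_nf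
    _ = Real.sqrt (Real.Gamma u) * Real.sqrt (Real.Gamma v) := by
        rw [← Real.rpow_def_of_pos hΓu, ← Real.rpow_def_of_pos hΓv,
          ← Real.sqrt_eq_rpow, ← Real.sqrt_eq_rpow]

lemma gamma_ratio_upper {z : ℝ} (hz : 0 < z) :
    Real.Gamma (z + 1/2) / Real.Gamma z ≤ Real.sqrt z := by
  have hΓz := Real.Gamma_pos_of_pos hz
  have h := gamma_convex_half hz (show (0:ℝ) < z + 1 by linarith)
  rw [show (1/2 : ℝ) * z + (1/2) * (z + 1) = z + 1/2 by ring,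
    Real.Gamma_add_one hz.ne', Real.sqrt_mul hz.le] at h
  have hss : Real.sqrt (Real.Gamma z) * Real.sqrt (Real.Gamma z) = Real.Gamma z :=
    Real.mul_self_sqrt hΓz.le
  rw [div_le_iff₀ hΓz]
  calc Real.Gamma (z + 1/2)
      ≤ Real.sqrt (Real.Gamma z) * (Real.sqrt z * Real.sqrt (Real.Gamma z)) := h
    _ = Real.sqrt z * (Real.sqrt (Real.Gamma z) * Real.sqrt (Real.Gamma z)) := by ring
    _ = Real.sqrt z * Real.Gamma z := by rw [hss]

lemma gamma_ratio_lower {z : ℝ} (hz : 0 < z) :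
    z / Real.sqrt (z + 1/2) ≤ Real.Gamma (z + 1/2) / Real.Gamma z := by
  have hΓz := Real.Gamma_pos_of_pos hz
  have hz2 : (0:ℝ) < z + 1/2 := by linarith
  have hΓz2 := Real.Gamma_pos_of_pos hz2
  have h := gamma_convex_half hz2 (show (0:ℝ) < z + 3/2 by linarith)
  rw [show (1/2 : ℝ) * (z + 1/2) + (1/2) * (z + 3/2) = z + 1 by ring,
    show (z : ℝ) + 3/2 = (z + 1/2) + 1 by ring, Real.Gamma_add_one hz2.ne',
    Real.Gamma_add_one hz.ne', Real.sqrt_mul hz2.le] at h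
  have hss : Real.sqrt (Real.Gamma (z + 1/2)) * Real.sqrt (Real.Gamma (z + 1/2)) =
      Real.Gamma (z + 1/2) := Real.mul_self_sqrt hΓz2.le
  rw [div_le_div_iff₀ (Real.sqrt_pos.mpr hz2) hΓz]
  calc z * Real.Gamma z
      ≤ Real.sqrt (Real.Gamma (z + 1/2)) *
          (Real.sqrt (z + 1/2) * Real.sqrt (Real.Gamma (z + 1/2))) := h
    _ = (Real.sqrt (Real.Gamma (z + 1/2)) * Real.sqrt (Real.Gamma (z + 1/2))) *
          Real.sqrt (z + 1/2) := by ring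
    _ = Real.Gamma (z + 1/2) * Real.sqrt (z + 1/2) := by rw [hss]

end Helpers

set_option maxHeartbeats 1600000 in
/-- Deterministic form of Lemma 2.5, null case. -/
theorem lemma25_null (t r β δ c₀ : ℝ) (hr : 1 ≤ r) (hβ : 0 < β) (hδ : 0 < δ)
    (hc₀ : 0 < c₀) :
    Tendsto (fun n : ℕ => (n : ℝ) ^ (r + 1 / 2) * BF10t t (β * n) r (δ * n - c₀)) atTop
      (nhds (β ^ (-(r + 1 / 2)) *
        (oneF1 (r + 1 / 2) (1 / 2) (t ^ 2 / 2)
          + (t / Real.sqrt 2) * (Real.Gamma (r + 1) / Real.Gamma (r + 1 / 2)) *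
              oneF1 (r + 1) (3 / 2) (t ^ 2 / 2)))) ∧
    (fun n : ℕ => BF10t t (β * n) r (δ * n - c₀)) =O[atTop]
      fun n : ℕ => (n : ℝ) ^ (-(r + 1 / 2)) := by
  have hb1 : (0:ℝ) < r + 1/2 := by linarith
  have hb2 : (0:ℝ) < r + 1 := by linarith
  have hc1 : (0:ℝ) < (1:ℝ)/2 := by norm_num
  have hc2 : (0:ℝ) < (3:ℝ)/2 := by norm_num
  have hL : (0:ℝ) ≤ t ^ 2 / 2 := by positivity
  have hβtop : Tendsto (fun n : ℕ => β * n) atTop atTop :=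
    tendsto_natCast_atTop_atTop.const_mul_atTop hβ
  have hνtop : Tendsto (fun n : ℕ => δ * n - c₀) atTop atTop := by
    simpa [sub_eq_add_neg] using
      tendsto_atTop_add_const_right atTop (-c₀)
        (tendsto_natCast_atTop_atTop.const_mul_atTop hδ)
  have hβn : ∀ᶠ n : ℕ in atTop, (1:ℝ) ≤ β * n := hβtop.eventually_ge_atTop 1
  have hνn : ∀ᶠ n : ℕ in atTop, (1:ℝ) ≤ δ * n - c₀ := hνtop.eventually_ge_atTop 1
  have hmid : Tendsto (fun n : ℕ => β * n / (1 + β * n)) atTop (nhds 1) := by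
    have h := lin_div_one β 0 1 hβ
    exact Tendsto.congr (fun n => by congr 1 <;> ring) h
  -- explicit form of tArg²
  have hXeq : ∀ᶠ n : ℕ in atTop, tArg t (β * n) (δ * n - c₀) ^ 2
      = β * n * t ^ 2 / ((δ * n - c₀ + t ^ 2) * (1 + β * n)) := by
    filter_upwards [hβn, hνn] with n h1 h2
    have hτ : (0:ℝ) ≤ β * n := by linarith
    have hD : (0:ℝ) ≤ (δ * n - c₀ + t ^ 2) * (1 + β * n) := by nlinarith [sq_nonneg t]
    rw [tArg, div_pow, mul_pow, Real.sq_sqrt hτ, Real.sq_sqrt hD]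
  -- x → 0
  have hX0 : Tendsto (fun n : ℕ => tArg t (β * n) (δ * n - c₀) ^ 2) atTop (nhds 0) := by
    have hinv : Tendsto (fun n : ℕ => (δ * n - c₀ + t ^ 2)⁻¹) atTop (nhds 0) :=
      (tendsto_atTop_add_const_right atTop (t ^ 2) hνtop).inv_tendsto_atTop
    have hbase : Tendsto
        (fun n : ℕ => t ^ 2 * (β * n / (1 + β * n)) * (δ * n - c₀ + t ^ 2)⁻¹)
        atTop (nhds (t ^ 2 * 1 * 0)) := (tendsto_const_nhds.mul hmid).mul hinv
    rw [show (0:ℝ) = t ^ 2 * 1 * 0 by ring]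
    refine Tendsto.congr' ?_ hbase
    filter_upwards [hXeq, hβn, hνn] with n hx h1 h2
    rw [hx]
    have hd1 : (δ * (n:ℝ) - c₀ + t ^ 2) ≠ 0 := by nlinarith [sq_nonneg t]
    have hd2 : (1 + β * (n:ℝ)) ≠ 0 := by linarith
    field_simp
  -- a₁ * x → t²/2
  have hax1 : Tendsto (fun n : ℕ =>
      (δ * n - c₀ + 1) / 2 * tArg t (β * n) (δ * n - c₀) ^ 2) atTop (nhds (t ^ 2 / 2)) := by
    have hq : Tendsto (fun n : ℕ => (δ * n + (1 - c₀)) / (δ * n + (t ^ 2 - c₀))) atTop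
      (nhds 1) := lin_div_one δ _ _ hδ
    have hbase : Tendsto (fun n : ℕ =>
        t ^ 2 / 2 * ((δ * n + (1 - c₀)) / (δ * n + (t ^ 2 - c₀))) * (β * n / (1 + β * n)))
        atTop (nhds (t ^ 2 / 2 * 1 * 1)) := (tendsto_const_nhds.mul hq).mul hmid
    rw [show t ^ 2 / 2 = t ^ 2 / 2 * 1 * 1 by ring]
    refine Tendsto.congr' ?_ hbase
    filter_upwards [hXeq, hβn, hνn] with n hx h1 h2
    rw [hx]
    have hd1 : (δ * (n:ℝ) - c₀ + t ^ 2) ≠ 0 := by nlinarith [sq_nonneg t]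
    have hd1' : (δ * (n:ℝ) + (t ^ 2 - c₀)) ≠ 0 := by intro h; apply hd1; linarith
    have hd2 : (1 + β * (n:ℝ)) ≠ 0 := by linarith
    field_simp
    ring
  -- a₂ * x → t²/2
  have hax2 : Tendsto (fun n : ℕ =>
      ((δ * n - c₀) / 2 + 1) * tArg t (β * n) (δ * n - c₀) ^ 2) atTop (nhds (t ^ 2 / 2)) := by
    have hq : Tendsto (fun n : ℕ => (δ * n + (2 - c₀)) / (δ * n + (t ^ 2 - c₀))) atTop
      (nhds 1) := lin_div_one δ _ _ hδ
    have hbase : Tendsto (fun n : ℕ =>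
        t ^ 2 / 2 * ((δ * n + (2 - c₀)) / (δ * n + (t ^ 2 - c₀))) * (β * n / (1 + β * n)))
        atTop (nhds (t ^ 2 / 2 * 1 * 1)) := (tendsto_const_nhds.mul hq).mul hmid
    rw [show t ^ 2 / 2 = t ^ 2 / 2 * 1 * 1 by ring]
    refine Tendsto.congr' ?_ hbase
    filter_upwards [hXeq, hβn, hνn] with n hx h1 h2
    rw [hx]
    have hd1 : (δ * (n:ℝ) - c₀ + t ^ 2) ≠ 0 := by nlinarith [sq_nonneg t]
    have hd1' : (δ * (n:ℝ) + (t ^ 2 - c₀)) ≠ 0 := by intro h; apply hd1; linarith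
    have hd2 : (1 + β * (n:ℝ)) ≠ 0 := by linarith
    field_simp
    ring
  have ha1 : ∀ᶠ n : ℕ in atTop, (0:ℝ) ≤ (δ * n - c₀ + 1) / 2 := by
    filter_upwards [hνn] with n h; linarith
  have ha2 : ∀ᶠ n : ℕ in atTop, (0:ℝ) ≤ (δ * n - c₀) / 2 + 1 := by
    filter_upwards [hνn] with n h; linarith
  have hT1 : Tendsto (fun n : ℕ => twoF1 ((δ * n - c₀ + 1) / 2) (r + 1/2) (1/2)
      (tArg t (β * n) (δ * n - c₀) ^ 2)) atTop (nhds (oneF1 (r + 1/2) (1/2) (t ^ 2 / 2))) :=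
    twoF1_tendsto hb1 hc1 hL ha1 (fun n => sq_nonneg _) hX0 hax1
  have hT2 : Tendsto (fun n : ℕ => twoF1 ((δ * n - c₀) / 2 + 1) (r + 1) (3/2)
      (tArg t (β * n) (δ * n - c₀) ^ 2)) atTop (nhds (oneF1 (r + 1) (3/2) (t ^ 2 / 2))) :=
    twoF1_tendsto hb2 hc2 hL ha2 (fun n => sq_nonneg _) hX0 hax2
  -- the tArg · Gamma-ratio factor
  have hztop : Tendsto (fun n : ℕ => (δ * n - c₀ + 1) / 2) atTop atTop :=
    (tendsto_atTop_add_const_right atTop 1 hνtop).atTop_div_const (by norm_num)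
  have hz1 : ∀ᶠ n : ℕ in atTop, (1:ℝ) ≤ (δ * n - c₀ + 1) / 2 := hztop.eventually_ge_atTop 1
  have hratio : Tendsto (fun n : ℕ =>
      Real.Gamma ((δ * n - c₀ + 1) / 2 + 1/2) / Real.Gamma ((δ * n - c₀ + 1) / 2) /
        Real.sqrt ((δ * n - c₀ + 1) / 2)) atTop (nhds 1) := by
    have hlowt : Tendsto (fun n : ℕ =>
        Real.sqrt (((δ * n - c₀ + 1) / 2) / ((δ * n - c₀ + 1) / 2 + 1/2))) atTop (nhds 1) := by
      have hq : Tendsto (fun n : ℕ => (δ/2 * n + (1 - c₀)/2) / (δ/2 * n + (2 - c₀)/2)) atTop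
        (nhds 1) := lin_div_one (δ/2) _ _ (by positivity)
      have hq2 : Tendsto (fun n : ℕ =>
          ((δ * n - c₀ + 1) / 2) / ((δ * n - c₀ + 1) / 2 + 1/2)) atTop (nhds 1) :=
        Tendsto.congr (fun n => by congr 1 <;> ring) hq
      have hcomp := (Real.continuous_sqrt.tendsto 1).comp hq2
      rwa [Real.sqrt_one] at hcomp
    refine tendsto_of_tendsto_of_tendsto_of_le_of_le' hlowt tendsto_const_nhds ?_ ?_
    · filter_upwards [hz1] with n h1
      have hz0 : (0:ℝ) < (δ * n - c₀ + 1) / 2 := by linarith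
      have hzs : 0 < Real.sqrt ((δ * n - c₀ + 1) / 2) := Real.sqrt_pos.mpr hz0
      calc Real.sqrt (((δ * n - c₀ + 1) / 2) / ((δ * n - c₀ + 1) / 2 + 1/2))
          = Real.sqrt ((δ * n - c₀ + 1) / 2) / Real.sqrt ((δ * n - c₀ + 1) / 2 + 1/2) :=
            Real.sqrt_div hz0.le _
        _ = (δ * n - c₀ + 1) / 2 / Real.sqrt ((δ * n - c₀ + 1) / 2 + 1/2) /
              Real.sqrt ((δ * n - c₀ + 1) / 2) := by
            have hw0 : (0:ℝ) < (δ * n - c₀ + 1) / 2 + 1/2 := by linarith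
            have hws : (0:ℝ) < Real.sqrt ((δ * n - c₀ + 1) / 2 + 1/2) := Real.sqrt_pos.mpr hw0
            rw [div_div, eq_div_iff (by positivity : Real.sqrt ((δ * n - c₀ + 1) / 2 + 1/2) *
              Real.sqrt ((δ * n - c₀ + 1) / 2) ≠ 0)]
            calc Real.sqrt ((δ * n - c₀ + 1) / 2) / Real.sqrt ((δ * n - c₀ + 1) / 2 + 1/2) *
                  (Real.sqrt ((δ * n - c₀ + 1) / 2 + 1/2) * Real.sqrt ((δ * n - c₀ + 1) / 2))
                = (Real.sqrt ((δ * n - c₀ + 1) / 2) * Real.sqrt ((δ * n - c₀ + 1) / 2)) *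
                    (Real.sqrt ((δ * n - c₀ + 1) / 2 + 1/2) /
                      Real.sqrt ((δ * n - c₀ + 1) / 2 + 1/2)) := by ring
              _ = (δ * n - c₀ + 1) / 2 := by
                  rw [Real.mul_self_sqrt hz0.le, div_self hws.ne', mul_one]
        _ ≤ Real.Gamma ((δ * n - c₀ + 1) / 2 + 1/2) / Real.Gamma ((δ * n - c₀ + 1) / 2) /
              Real.sqrt ((δ * n - c₀ + 1) / 2) :=
            div_le_div_of_nonneg_right (gamma_ratio_lower hz0) hzs.le
    · filter_upwards [hz1] with n h1
      have hz0 : (0:ℝ) < (δ * n - c₀ + 1) / 2 := by linarith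
      rw [div_le_one (Real.sqrt_pos.mpr hz0)]
      exact gamma_ratio_upper hz0
  have hA' : Tendsto (fun n : ℕ =>
      tArg t (β * n) (δ * n - c₀) * Real.sqrt ((δ * n - c₀ + 1) / 2)) atTop
      (nhds (t / Real.sqrt 2)) := by
    have hq : Tendsto (fun n : ℕ => (δ * n + (1 - c₀)) / (δ * n + (t ^ 2 - c₀))) atTop
      (nhds 1) := lin_div_one δ _ _ hδ
    have hu0 : Tendsto (fun n : ℕ =>
        1/2 * (β * n / (1 + β * n)) * ((δ * n + (1 - c₀)) / (δ * n + (t ^ 2 - c₀))))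
        atTop (nhds (1/2 * 1 * 1)) := (tendsto_const_nhds.mul hmid).mul hq
    have hu : Tendsto (fun n : ℕ =>
        β * n * ((δ * n - c₀ + 1) / 2) / ((δ * n - c₀ + t ^ 2) * (1 + β * n))) atTop
        (nhds (1/2 : ℝ)) := by
      rw [show (1/2 : ℝ) = 1/2 * 1 * 1 by ring]
      refine Tendsto.congr' ?_ hu0
      filter_upwards [hβn, hνn] with n h1 h2
      have hd1 : (δ * (n:ℝ) - c₀ + t ^ 2) ≠ 0 := by nlinarith [sq_nonneg t]
      have hd1' : (δ * (n:ℝ) + (t ^ 2 - c₀)) ≠ 0 := by intro h; apply hd1; linarith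
      have hd2 : (1 + β * (n:ℝ)) ≠ 0 := by linarith
      field_simp
      ring
    have hts : Tendsto (fun n : ℕ => t * Real.sqrt
        (β * n * ((δ * n - c₀ + 1) / 2) / ((δ * n - c₀ + t ^ 2) * (1 + β * n)))) atTop
        (nhds (t * Real.sqrt (1/2))) :=
      tendsto_const_nhds.mul ((Real.continuous_sqrt.tendsto _).comp hu)
    have hval : t * Real.sqrt (1/2 : ℝ) = t / Real.sqrt 2 := by
      rw [show (1/2 : ℝ) = 2⁻¹ by norm_num, Real.sqrt_inv, div_eq_mul_inv]
    rw [hval] at hts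
    refine Tendsto.congr' ?_ hts
    filter_upwards [hβn, hνn] with n h1 h2
    have hτ : (0:ℝ) ≤ β * n := by linarith
    have hz0 : (0:ℝ) ≤ (δ * n - c₀ + 1) / 2 := by linarith
    rw [tArg, Real.sqrt_div (by positivity : (0:ℝ) ≤ β * (n:ℝ) * ((δ * n - c₀ + 1) / 2)),
      Real.sqrt_mul hτ]
    ring
  have hW : Tendsto (fun n : ℕ =>
      tArg t (β * n) (δ * n - c₀) *
        (Real.Gamma ((δ * n - c₀) / 2 + 1) / Real.Gamma ((δ * n - c₀ + 1) / 2))) atTop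
      (nhds (t / Real.sqrt 2)) := by
    have hcomb := hA'.mul hratio
    rw [mul_one] at hcomb
    refine Tendsto.congr' ?_ hcomb
    filter_upwards [hz1] with n h1
    have hz0 : (0:ℝ) < (δ * n - c₀ + 1) / 2 := by linarith
    have hzs : Real.sqrt ((δ * n - c₀ + 1) / 2) ≠ 0 := (Real.sqrt_pos.mpr hz0).ne'
    rw [show (δ * (n:ℝ) - c₀) / 2 + 1 = (δ * n - c₀ + 1) / 2 + 1/2 by ring]
    have hre : tArg t (β * n) (δ * n - c₀) * Real.sqrt ((δ * n - c₀ + 1) / 2) *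
        (Real.Gamma ((δ * n - c₀ + 1) / 2 + 1/2) / Real.Gamma ((δ * n - c₀ + 1) / 2) /
          Real.sqrt ((δ * n - c₀ + 1) / 2)) =
        tArg t (β * n) (δ * n - c₀) *
          (Real.Gamma ((δ * n - c₀ + 1) / 2 + 1/2) / Real.Gamma ((δ * n - c₀ + 1) / 2)) *
          (Real.sqrt ((δ * n - c₀ + 1) / 2) / Real.sqrt ((δ * n - c₀ + 1) / 2)) := by
      ring
    rw [hre, div_self hzs, mul_one]
  -- the power factor
  have hA : Tendsto (fun n : ℕ => (n : ℝ) ^ (r + 1/2) * (1 + β * n) ^ (-(r + 1/2))) atTop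
      (nhds (β ^ (-(r + 1/2)))) := by
    have hq : Tendsto (fun n : ℕ => (n : ℝ) / (1 + β * n)) atTop (nhds (1/β)) :=
      Tendsto.congr (fun n => by congr 1 <;> ring) (lin_div 1 β 0 1 hβ)
    have hpow := hq.rpow_const (Or.inr (by positivity : (0:ℝ) ≤ r + 1/2))
    have hval : (1/β : ℝ) ^ (r + 1/2) = β ^ (-(r + 1/2)) := by
      rw [one_div, Real.inv_rpow hβ.le, ← Real.rpow_neg hβ.le]
    rw [hval] at hpow
    refine Tendsto.congr (fun n => ?_) hpow
    rw [Real.div_rpow (Nat.cast_nonneg n) (by positivity : (0:ℝ) ≤ 1 + β * n),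
      Real.rpow_neg (by positivity : (0:ℝ) ≤ 1 + β * n), div_eq_mul_inv]
  have hG : Tendsto (fun _ : ℕ => Real.Gamma (r + 1) / Real.Gamma (r + 1/2)) atTop
      (nhds (Real.Gamma (r + 1) / Real.Gamma (r + 1/2))) := tendsto_const_nhds
  have hmain := hA.mul (hT1.add ((hW.mul hG).mul hT2))
  have hfirst : Tendsto (fun n : ℕ => (n : ℝ) ^ (r + 1 / 2) * BF10t t (β * n) r (δ * n - c₀))
      atTop (nhds (β ^ (-(r + 1 / 2)) *
        (oneF1 (r + 1 / 2) (1 / 2) (t ^ 2 / 2)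
          + (t / Real.sqrt 2) * (Real.Gamma (r + 1) / Real.Gamma (r + 1 / 2)) *
              oneF1 (r + 1) (3 / 2) (t ^ 2 / 2)))) := by
    refine Tendsto.congr (fun n => ?_) hmain
    simp only [BF10t]
    ring
  refine ⟨hfirst, ?_⟩
  have hO1 := hfirst.isBigO_one ℝ
  have hO2 := hO1.mul (isBigO_refl (fun n : ℕ => (n : ℝ) ^ (-(r + 1/2))) atTop)
  refine hO2.congr' ?_ ?_
  · filter_upwards [eventually_ge_atTop 1] with n hn
    have hn0 : (0:ℝ) < n := by exact_mod_cast Nat.succ_le_iff.mp hn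
    have hone : (n : ℝ) ^ (r + 1/2) * (n : ℝ) ^ (-(r + 1/2)) = 1 := by
      rw [← Real.rpow_add hn0, show r + 1/2 + -(r + 1/2) = 0 by ring, Real.rpow_zero]
    calc (n : ℝ) ^ (r + 1/2) * BF10t t (β * n) r (δ * n - c₀) * (n : ℝ) ^ (-(r + 1/2))
        = BF10t t (β * n) r (δ * n - c₀) * ((n : ℝ) ^ (r + 1/2) * (n : ℝ) ^ (-(r + 1/2))) := by
          ring
      _ = BF10t t (β * n) r (δ * n - c₀) := by rw [hone, mul_one]
  · exact Eventually.of_forall fun n => one_mul _
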